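/- Corollary 1(ii) (generalization bound on the source expected joint error): for any source domain S over X×Y, any prior probability measure π on H, any δ ∈ (0,1], and any b > 0, with probability at least 1−δ over the draw of S = {(x_i,y_i)}_{i=1}^{m_s} ~ S^{m_s}, simultaneously for every probability measure ρ on H: e_S(ρ) ≤ (b/(1−e^{−b})) · [ ê_S(ρ) + (2·KL(ρ‖π) + ln(1/δ)) / (m_s·b) ]. -/

import Mathlib

open MeasureTheory

noncomputable section

/-- The 0-1 loss on labels in `{−1,+1}`, encoded by `Bool` (`false ↦ −1`, `true ↦ +1`). -/
def l01 (a b : Bool) : ℝ := if a = b then 0 else 1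

variable {X H : Type*} [MeasurableSpace X] [MeasurableSpace H]

/-- The Kullback–Leibler divergence `KL(ρ‖π) = E_{h~ρ} ln(dρ/dπ)` (for `ρ ≪ π` with
integrable log-likelihood ratio, i.e. the cases where `KL(ρ‖π) < +∞`). -/
def klReal (ρ π : Measure H) : ℝ := ∫ h, llr ρ π h ∂ρ

/-- The expected joint error `e_P(ρ) = E_{(h,h')~ρ⊗ρ} E_{(x,y)~P} ℓ(h(x),y)·ℓ(h'(x),y)`. -/
def jointErr (F : H → X → Bool) (P : Measure (X × Bool)) (ρ : Measure H) : ℝ :=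
  ∫ p, ∫ z, l01 (F p.1 z.1) z.2 * l01 (F p.2 z.1) z.2 ∂P ∂(ρ.prod ρ)

section helpers
variable {α : Type*} [MeasurableSpace α]

lemma my_kl_nonneg (μ ξ : Measure α) [IsProbabilityMeasure μ] [IsProbabilityMeasure ξ]
    (hac : μ ≪ ξ) (hint : Integrable (llr μ ξ) μ) : 0 ≤ ∫ x, llr μ ξ x ∂μ := by
  have h1 : Integrable (fun x => (ξ.rnDeriv μ x).toReal) μ := Measure.integrable_toReal_rnDeriv
  have h2 : Integrable (fun x => Real.exp (-(llr μ ξ x))) μ :=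
    h1.congr (Filter.EventuallyEq.symm (exp_neg_llr hac))
  have h3 : ∫ x, -(llr μ ξ x) ∂μ ≤ ∫ x, Real.exp (-(llr μ ξ x)) - 1 ∂μ := by
    refine integral_mono hint.neg (h2.sub (integrable_const 1)) ?_
    intro x
    have := Real.add_one_le_exp (-(llr μ ξ x))
    simp only
    linarith
  have h4 : ∫ x, Real.exp (-(llr μ ξ x)) ∂μ ≤ 1 := by
    rw [integral_congr_ae (exp_neg_llr hac)]
    calc ∫ x, (ξ.rnDeriv μ x).toReal ∂μ
        ≤ (ξ Set.univ).toReal := by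
          rw [← setIntegral_univ]
          exact Measure.setIntegral_toReal_rnDeriv_le (measure_ne_top ξ _)
      _ = 1 := by simp
  rw [integral_sub h2 (integrable_const 1)] at h3
  rw [integral_neg] at h3
  simp only [integral_const, measure_univ, ENNReal.toReal_one, probReal_univ, smul_eq_mul, one_mul] at h3
  linarith

lemma my_prod_withDensity (ρ π : Measure α) [IsProbabilityMeasure ρ] [IsProbabilityMeasure π]
    (hac : ρ ≪ π) :
    ρ.prod ρ = (π.prod π).withDensity (fun q => ρ.rnDeriv π q.1 * ρ.rnDeriv π q.2) := by
  refine Measure.prod_eq fun s t hs ht => ?_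
  rw [withDensity_apply _ (hs.prod ht), ← Measure.prod_restrict s t]
  rw [lintegral_prod_mul ((Measure.measurable_rnDeriv ρ π).aemeasurable)
      ((Measure.measurable_rnDeriv ρ π).aemeasurable)]
  rw [Measure.setLIntegral_rnDeriv hac, Measure.setLIntegral_rnDeriv hac]

lemma my_llr_prod (ρ π : Measure α) [IsProbabilityMeasure ρ] [IsProbabilityMeasure π]
    (hac : ρ ≪ π) :
    llr (ρ.prod ρ) (π.prod π) =ᵐ[ρ.prod ρ] fun q => llr ρ π q.1 + llr ρ π q.2 := by
  have hacp : ρ.prod ρ ≪ π.prod π := hac.prod hac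
  have hrn : (ρ.prod ρ).rnDeriv (π.prod π)
      =ᵐ[π.prod π] fun q => ρ.rnDeriv π q.1 * ρ.rnDeriv π q.2 := by
    rw [my_prod_withDensity ρ π hac]
    exact Measure.rnDeriv_withDensity (π.prod π)
      ((Measure.measurable_rnDeriv ρ π).comp measurable_fst |>.mul
        ((Measure.measurable_rnDeriv ρ π).comp measurable_snd))
  have hpos : ∀ᵐ x ∂ρ, 0 < ρ.rnDeriv π x ∧ ρ.rnDeriv π x < ⊤ :=
    (Measure.rnDeriv_pos hac).and (hac.ae_le (Measure.rnDeriv_lt_top ρ π))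
  have hfst : ∀ᵐ q ∂ρ.prod ρ, 0 < ρ.rnDeriv π q.1 ∧ ρ.rnDeriv π q.1 < ⊤ :=
    Measure.quasiMeasurePreserving_fst.ae hpos
  have hsnd : ∀ᵐ q ∂ρ.prod ρ, 0 < ρ.rnDeriv π q.2 ∧ ρ.rnDeriv π q.2 < ⊤ :=
    Measure.quasiMeasurePreserving_snd.ae hpos
  filter_upwards [hacp.ae_le hrn, hfst, hsnd] with q hq h1 h2
  rw [llr, hq, llr, llr, ENNReal.toReal_mul]
  rw [Real.log_mul]
  · exact (ENNReal.toReal_ne_zero).2 ⟨h1.1.ne', h1.2.ne⟩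
  · exact (ENNReal.toReal_ne_zero).2 ⟨h2.1.ne', h2.2.ne⟩

lemma my_comp_fst_integrable (ρ : Measure α) [IsProbabilityMeasure ρ] {f : α → ℝ}
    (hf : Integrable f ρ) : Integrable (fun q : α × α => f q.1) (ρ.prod ρ) := by
  have h : MeasurePreserving (Prod.fst : α × α → α) (ρ.prod ρ) ρ :=
    ⟨measurable_fst, by simp⟩
  exact (h.integrable_comp hf.aestronglyMeasurable).2 hf

lemma my_comp_snd_integrable (ρ : Measure α) [IsProbabilityMeasure ρ] {f : α → ℝ}
    (hf : Integrable f ρ) : Integrable (fun q : α × α => f q.2) (ρ.prod ρ) := by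
  have h : MeasurePreserving (Prod.snd : α × α → α) (ρ.prod ρ) ρ :=
    ⟨measurable_snd, by simp⟩
  exact (h.integrable_comp hf.aestronglyMeasurable).2 hf

lemma my_llr_prod_integrable (ρ π : Measure α) [IsProbabilityMeasure ρ] [IsProbabilityMeasure π]
    (hac : ρ ≪ π) (hint : Integrable (llr ρ π) ρ) :
    Integrable (llr (ρ.prod ρ) (π.prod π)) (ρ.prod ρ) := by
  refine Integrable.congr ?_ (my_llr_prod ρ π hac).symm
  exact (my_comp_fst_integrable ρ hint).add (my_comp_snd_integrable ρ hint)

lemma my_llr_prod_integral (ρ π : Measure α) [IsProbabilityMeasure ρ] [IsProbabilityMeasure π]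
    (hac : ρ ≪ π) (hint : Integrable (llr ρ π) ρ) :
    ∫ q, llr (ρ.prod ρ) (π.prod π) q ∂(ρ.prod ρ) = 2 * ∫ x, llr ρ π x ∂ρ := by
  rw [integral_congr_ae (my_llr_prod ρ π hac),
    integral_add (my_comp_fst_integrable ρ hint) (my_comp_snd_integrable ρ hint)]
  have e1 : ∫ q : α × α, llr ρ π q.1 ∂(ρ.prod ρ) = ∫ x, llr ρ π x ∂ρ := by
    rw [← integral_map measurable_fst.aemeasurable]
    · simp
    · simpa using (measurable_llr ρ π).aestronglyMeasurable
  have e2 : ∫ q : α × α, llr ρ π q.2 ∂(ρ.prod ρ) = ∫ x, llr ρ π x ∂ρ := by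
    rw [← integral_map measurable_snd.aemeasurable]
    · simp
    · simpa using (measurable_llr ρ π).aestronglyMeasurable
  rw [e1, e2]; ring

/-- Integrability of bounded measurable functions on finite measure spaces. -/
lemma my_bdd_integrable {β : Type*} [MeasurableSpace β] (τ : Measure β) [IsFiniteMeasure τ]
    {f : β → ℝ} {C : ℝ} (hf : Measurable f) (hbd : ∀ x, |f x| ≤ C) : Integrable f τ :=
  Integrable.mono' (integrable_const C) hf.aestronglyMeasurable (ae_of_all _ hbd)

end helpers


set_option maxHeartbeats 2000000 in
/-- Corollary 1(ii) (generalization bound on the source expected joint error): for any source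
domain `S` over `X×Y`, any prior `π` on `H`, any `δ ∈ (0,1]` and any `b > 0`, with probability
at least `1−δ` over an i.i.d. `m_s`-sample from `S`, simultaneously for every posterior `ρ`
on `H` (with `KL(ρ‖π) < ∞`):
`e_S(ρ) ≤ (b/(1−e^{−b})) · [ ê_S(ρ) + (2·KL(ρ‖π) + ln(1/δ))/(m_s·b) ]`. -/
theorem joint_error_generalization_bound
    (F : H → X → Bool) (hF : Measurable (Function.uncurry F))
    (S : Measure (X × Bool)) [IsProbabilityMeasure S]
    (π : Measure H) [IsProbabilityMeasure π]
    (ms : ℕ) (hms : 0 < ms)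
    (δ : ℝ) (hδ : δ ∈ Set.Ioc (0 : ℝ) 1)
    (b : ℝ) (hb : 0 < b) :
    (Measure.pi fun _ : Fin ms => S)
      {s | ∀ ρ : Measure H, IsProbabilityMeasure ρ → ρ ≪ π →
        Integrable (llr ρ π) ρ →
        jointErr F S ρ
          ≤ (b / (1 - Real.exp (-b))) *
              ((∫ p, (1 / (ms : ℝ)) *
                  ∑ i : Fin ms, l01 (F p.1 (s i).1) (s i).2 * l01 (F p.2 (s i).1) (s i).2
                  ∂(ρ.prod ρ))
                + (2 * klReal ρ π + Real.log (1 / δ)) / ((ms : ℝ) * b))}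
      ≥ ENNReal.ofReal (1 - δ) := by
  obtain ⟨hδ0, hδ1⟩ := hδ
  set c : ℝ := 1 - Real.exp (-b) with hc_def
  have hc0 : 0 < c := by
    have : Real.exp (-b) < 1 := Real.exp_lt_one_iff.2 (by linarith)
    simp only [hc_def]; linarith
  have hc1 : 0 < 1 - c := by
    have := Real.exp_pos (-b); simp only [hc_def]; linarith
  -- the per-sample joint loss
  set g : H × H → X × Bool → ℝ :=
    fun q z => l01 (F q.1 z.1) z.2 * l01 (F q.2 z.1) z.2 with hg_def
  have hg01 : ∀ q z, g q z = 0 ∨ g q z = 1 := by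
    intro q z
    simp only [hg_def, l01]
    rcases eq_or_ne (F q.1 z.1) z.2 with h1 | h1 <;>
      rcases eq_or_ne (F q.2 z.1) z.2 with h2 | h2 <;> simp [h1, h2]
  have hg0 : ∀ q z, 0 ≤ g q z := by
    intro q z; rcases hg01 q z with h | h <;> rw [h] <;> norm_num
  have hg1 : ∀ q z, g q z ≤ 1 := by
    intro q z; rcases hg01 q z with h | h <;> rw [h] <;> norm_num
  have hgm : Measurable (fun w : (H × H) × (X × Bool) => g w.1 w.2) := by
    have m1 : Measurable fun w : (H × H) × (X × Bool) => F w.1.1 w.2.1 :=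
      hF.comp ((measurable_fst.comp measurable_fst).prodMk (measurable_fst.comp measurable_snd))
    have m2 : Measurable fun w : (H × H) × (X × Bool) => F w.1.2 w.2.1 :=
      hF.comp ((measurable_snd.comp measurable_fst).prodMk (measurable_fst.comp measurable_snd))
    have mz : Measurable fun w : (H × H) × (X × Bool) => w.2.2 :=
      measurable_snd.comp measurable_snd
    have hs1 : MeasurableSet {w : (H × H) × (X × Bool) | F w.1.1 w.2.1 = w.2.2} :=
      measurableSet_eq_fun m1 mz
    have hs2 : MeasurableSet {w : (H × H) × (X × Bool) | F w.1.2 w.2.1 = w.2.2} :=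
      measurableSet_eq_fun m2 mz
    simp only [hg_def, l01]
    exact (Measurable.ite hs1 measurable_const measurable_const).mul
      (Measurable.ite hs2 measurable_const measurable_const)
  -- expected joint loss
  set p : H × H → ℝ := fun q => ∫ z, g q z ∂S with hp_def
  have hgm_sec : ∀ q, Measurable fun z => g q z := by
    intro q; exact hgm.comp (measurable_prodMk_left)
  have hgint_sec : ∀ q, Integrable (fun z => g q z) S := by
    intro q
    exact my_bdd_integrable S (hgm_sec q)
      (fun z => abs_le.2 ⟨by linarith [hg0 q z], hg1 q z⟩)
  have hp0 : ∀ q, 0 ≤ p q := fun q => integral_nonneg (hg0 q)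
  have hp1 : ∀ q, p q ≤ 1 := by
    intro q
    calc p q ≤ ∫ _z, (1 : ℝ) ∂S := integral_mono (hgint_sec q) (integrable_const 1) (hg1 q)
      _ = 1 := by simp
  have hpm : Measurable p := by
    have := (hgm.stronglyMeasurable.integral_prod_right' (ν := S))
    exact this.measurable
  have h1cp : ∀ q, 0 < 1 - c * p q := by
    intro q
    nlinarith [hp0 q, hp1 q, hc0, hc1]
  have h1cg : ∀ q z, 0 < 1 - c * g q z := by
    intro q z
    nlinarith [hg0 q z, hg1 q z, hc0, hc1]
  set μpi : Measure (Fin ms → X × Bool) := Measure.pi fun _ => S with hμpi_def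
  haveI : IsProbabilityMeasure μpi := by rw [hμpi_def]; infer_instance
  -- the exponential-moment integrand
  set G : (H × H) × (Fin ms → X × Bool) → ℝ :=
    fun w => (1 - c * p w.1)⁻¹ ^ ms * ∏ i, (1 - c * g w.1 (w.2 i)) with hG_def
  have hGm : Measurable G := by
    apply Measurable.mul
    · exact (((measurable_const.sub ((hpm.comp measurable_fst).const_mul c)).inv).pow
        measurable_const)
    · refine Finset.measurable_prod _ fun i _ => ?_
      exact measurable_const.sub
        ((hgm.comp (measurable_fst.prodMk
          (( measurable_pi_apply i).comp measurable_snd))).const_mul c)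
  have hprod_le_one : ∀ (q : H × H) (s : Fin ms → X × Bool),
      (∏ i, (1 - c * g q (s i))) ≤ 1 := by
    intro q s
    calc (∏ i, (1 - c * g q (s i))) ≤ ∏ _i : Fin ms, (1:ℝ) := by
          refine Finset.prod_le_prod (fun i _ => (h1cg q (s i)).le) (fun i _ => ?_)
          nlinarith [hg0 q (s i), hc0]
      _ = 1 := by simp
  have hprod_nonneg : ∀ (q : H × H) (s : Fin ms → X × Bool),
      0 ≤ ∏ i, (1 - c * g q (s i)) :=
    fun q s => Finset.prod_nonneg fun i _ => (h1cg q (s i)).le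
  have hGnn : ∀ w, 0 ≤ G w := by
    intro w
    exact mul_nonneg (pow_nonneg (inv_nonneg.2 (h1cp w.1).le) _) (hprod_nonneg w.1 w.2)
  have hGbd : ∀ w, |G w| ≤ (1 - c)⁻¹ ^ ms := by
    intro w
    rw [abs_of_nonneg (hGnn w)]
    calc G w ≤ (1 - c * p w.1)⁻¹ ^ ms * 1 :=
          mul_le_mul_of_nonneg_left (hprod_le_one w.1 w.2)
            (pow_nonneg (inv_nonneg.2 (h1cp w.1).le) _)
      _ = (1 - c * p w.1)⁻¹ ^ ms := mul_one _
      _ ≤ (1 - c)⁻¹ ^ ms := by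
          refine pow_le_pow_left₀ (inv_nonneg.2 (h1cp w.1).le) ?_ _
          refine inv_anti₀ hc1 ?_
          nlinarith [hp1 w.1, hc0]
  have hGint : Integrable G ((π.prod π).prod μpi) := my_bdd_integrable _ hGm hGbd
  -- Step A: exponential moment of the empirical term
  have hstepA : ∀ q : H × H,
      ∫ s, ∏ i, (1 - c * g q (s i)) ∂μpi = (1 - c * p q) ^ ms := by
    intro q
    letI : MeasureSpace (X × Bool) := ⟨S⟩
    haveI : SigmaFinite (volume : Measure (X × Bool)) := by
      show SigmaFinite S; infer_instance
    have hv : μpi = (volume : Measure (Fin ms → X × Bool)) := by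
      rw [hμpi_def]; rfl
    rw [hv]
    rw [MeasureTheory.integral_fintype_prod_volume_eq_pow (ι := Fin ms) (fun z => 1 - c * g q z)]
    have : ∫ z : X × Bool, (1 - c * g q z) = 1 - c * p q := by
      show ∫ z, (1 - c * g q z) ∂S = _
      rw [integral_sub (integrable_const 1) ((hgint_sec q).const_mul c)]
      simp only [integral_const, measure_univ, ENNReal.toReal_one, probReal_univ, smul_eq_mul, one_mul]
      rw [integral_const_mul, hp_def]
    rw [this, Fintype.card_fin]
  -- the averaged exponential moment
  set A : (Fin ms → X × Bool) → ℝ := fun s => ∫ q, G (q, s) ∂(π.prod π) with hA_def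
  have hAint : Integrable A μpi := hGint.integral_prod_right
  have hAnn : ∀ s, 0 ≤ A s := fun s => integral_nonneg fun q => hGnn (q, s)
  have hAmeas : Measurable A :=
    (hGm.stronglyMeasurable.integral_prod_left').measurable
  have hstepB : ∫ s, A s ∂μpi = 1 := by
    have hswap := integral_integral_swap (f := fun q s => G (q, s))
      (μ := π.prod π) (ν := μpi) hGint
    rw [hA_def, ← hswap]
    have : ∀ q : H × H, ∫ s, G (q, s) ∂μpi = 1 := by
      intro q
      have : ∀ s, G (q, s) = (1 - c * p q)⁻¹ ^ ms * ∏ i, (1 - c * g q (s i)) := fun s => rfl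
      simp_rw [this]
      rw [integral_const_mul, hstepA q, inv_pow]
      exact inv_mul_cancel₀ (pow_ne_zero _ (h1cp q).ne')
    simp_rw [this]
    simp
  -- Step C : Markov's inequality
  have hMarkov : μpi {s | 1 / δ ≤ A s} ≤ ENNReal.ofReal δ := by
    have hm := mul_meas_ge_le_integral_of_nonneg (ae_of_all _ hAnn) hAint (1 / δ)
    rw [hstepB] at hm
    have htr : (μpi {s | 1 / δ ≤ A s}).toReal ≤ δ := by
      rcases le_or_gt (μpi {s | 1 / δ ≤ A s}).toReal δ with h | h
      · exact h
      · exfalso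
        have h1 : (1 / δ) * δ < (1 / δ) * (μpi {s | 1 / δ ≤ A s}).toReal :=
          mul_lt_mul_of_pos_left h (by positivity)
        rw [one_div_mul_cancel hδ0.ne'] at h1
        have hm' : 1 / δ * (μpi {s | 1 / δ ≤ A s}).toReal ≤ 1 := hm
        linarith
    exact (ENNReal.le_ofReal_iff_toReal_le (measure_ne_top _ _) hδ0.le).2 htr
  -- Step D : on the good event, the bound holds for all posteriors
  have hsub : {s : Fin ms → X × Bool | A s < 1 / δ} ⊆
      {s | ∀ ρ : Measure H, IsProbabilityMeasure ρ → ρ ≪ π →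
        Integrable (llr ρ π) ρ →
        jointErr F S ρ
          ≤ (b / (1 - Real.exp (-b))) *
              ((∫ p, (1 / (ms : ℝ)) *
                  ∑ i : Fin ms, l01 (F p.1 (s i).1) (s i).2 * l01 (F p.2 (s i).1) (s i).2
                  ∂(ρ.prod ρ))
                + (2 * klReal ρ π + Real.log (1 / δ)) / ((ms : ℝ) * b))} := by
    intro s hs ρ hρ hρπ hllrint
    haveI := hρ
    simp only [Set.mem_setOf_eq] at hs
    set μ2 : Measure (H × H) := ρ.prod ρ with hμ2_def
    -- bounds on the log term
    have hlog_bd : ∀ q : H × H,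
        0 ≤ -Real.log (1 - c * p q) ∧ -Real.log (1 - c * p q) ≤ b := by
      intro q
      constructor
      · have : Real.log (1 - c * p q) ≤ 0 :=
          Real.log_nonpos (h1cp q).le (by nlinarith [hp0 q, hc0])
        linarith
      · have h1 : (1 : ℝ) - c = Real.exp (-b) := by simp [hc_def]
        have h2 : Real.log (1 - c) ≤ Real.log (1 - c * p q) :=
          Real.log_le_log hc1 (by nlinarith [hp1 q, hc0])
        rw [h1, Real.log_exp] at h2
        linarith
    -- the Donsker–Varadhan test function
    set fs : H × H → ℝ :=
      fun q => (ms : ℝ) * (-Real.log (1 - c * p q)) + ∑ i, (-b * g q (s i)) with hfs_def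
    have mlog : Measurable fun q : H × H => -Real.log (1 - c * p q) :=
      (Real.measurable_log.comp (measurable_const.sub (hpm.const_mul c))).neg
    have hgqi : ∀ i : Fin ms, Measurable fun q : H × H => g q (s i) := by
      intro i
      exact hgm.comp (measurable_id.prodMk measurable_const)
    have hfsm : Measurable fs := by
      refine (mlog.const_mul _).add ?_
      exact Finset.measurable_sum _ fun i _ => (hgqi i).const_mul (-b)
    have hsum_bd : ∀ q : H × H, -((ms : ℝ) * b) ≤ (∑ i, (-b * g q (s i))) ∧
        (∑ i, (-b * g q (s i))) ≤ 0 := by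
      intro q
      constructor
      · have h1 : ∀ i ∈ Finset.univ, (-b : ℝ) ≤ -b * g q (s i) := by
          intro i _
          nlinarith [hg1 q (s i), hb]
        have := Finset.sum_le_sum h1
        simpa [Finset.sum_const, mul_comm] using this
      · refine Finset.sum_nonpos fun i _ => ?_
        nlinarith [hg0 q (s i), hb]
    have hfs_bd : ∀ q, |fs q| ≤ (ms : ℝ) * b + (ms : ℝ) * b := by
      intro q
      have h1 := hlog_bd q
      have h2 := hsum_bd q
      have h3 : (ms : ℝ) * (-Real.log (1 - c * p q)) ≤ (ms : ℝ) * b :=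
        mul_le_mul_of_nonneg_left h1.2 (Nat.cast_nonneg _)
      have h4 : 0 ≤ (ms : ℝ) * (-Real.log (1 - c * p q)) :=
        mul_nonneg (Nat.cast_nonneg _) h1.1
      rw [hfs_def]
      rw [abs_le]
      constructor <;> simp only <;> nlinarith [Nat.cast_nonneg (α := ℝ) ms, hb]
    have hfs_int : Integrable fs μ2 := my_bdd_integrable _ hfsm hfs_bd
    -- exp (fs q) = G (q, s)
    have hexp_eq : ∀ q, Real.exp (fs q) = G (q, s) := by
      intro q
      rw [hfs_def]
      simp only
      rw [Real.exp_add, Real.exp_nat_mul, Real.exp_neg, Real.exp_log (h1cp q), Real.exp_sum]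
      congr 1
      refine Finset.prod_congr rfl fun i _ => ?_
      rcases hg01 q (s i) with h | h
      · rw [h]; simp
      · rw [h]; simp [hc_def]
    have hexpint : Integrable (fun q => Real.exp (fs q)) (π.prod π) := by
      refine Integrable.congr
        (my_bdd_integrable (π.prod π) (hGm.comp measurable_prodMk_right)
          (fun q => hGbd (q, s))) ?_
      exact ae_of_all _ fun q => (hexp_eq q).symm
    have hexp_int_eq : ∫ q, Real.exp (fs q) ∂(π.prod π) = A s := by
      rw [hA_def]
      exact integral_congr_ae (ae_of_all _ hexp_eq)
    have hApos : 0 < A s := by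
      rw [← hexp_int_eq]
      exact integral_exp_pos hexpint
    have hacp : μ2 ≪ π.prod π := hρπ.prod hρπ
    have hllr2int : Integrable (llr μ2 (π.prod π)) μ2 :=
      my_llr_prod_integrable ρ π hρπ hllrint
    haveI : IsProbabilityMeasure ((π.prod π).tilted fs) :=
      isProbabilityMeasure_tilted hexpint
    have hDVeq := integral_llr_tilted_right hacp hfs_int hexpint hllr2int
    have hDVnn : 0 ≤ ∫ q, llr μ2 ((π.prod π).tilted fs) q ∂μ2 :=
      my_kl_nonneg μ2 ((π.prod π).tilted fs)
        (hacp.trans (absolutelyContinuous_tilted hexpint))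
        (integrable_llr_tilted_right hacp hfs_int hllr2int hexpint)
    have hKL2 : ∫ q, llr μ2 (π.prod π) q ∂μ2 = 2 * klReal ρ π :=
      my_llr_prod_integral ρ π hρπ hllrint
    have hlogA : Real.log (A s) ≤ Real.log (1 / δ) :=
      Real.log_le_log hApos hs.le
    have hfs_le : ∫ q, fs q ∂μ2 ≤ 2 * klReal ρ π + Real.log (1 / δ) := by
      rw [hexp_int_eq, hKL2] at hDVeq
      linarith [hDVnn.trans_eq hDVeq]
    -- decompose ∫ fs
    have hInt1 : Integrable (fun q => -Real.log (1 - c * p q)) μ2 :=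
      my_bdd_integrable _ mlog
        (fun q => abs_le.2 ⟨by linarith [(hlog_bd q).1], (hlog_bd q).2⟩)
    have hInti : ∀ i : Fin ms, Integrable (fun q => g q (s i)) μ2 := by
      intro i
      exact my_bdd_integrable _ (hgqi i)
        (fun q => abs_le.2 ⟨by linarith [hg0 q (s i)], hg1 q (s i)⟩)
    have hsum_int : Integrable (fun q => ∑ i, -b * g q (s i)) μ2 :=
      integrable_finset_sum _ fun i _ => (hInti i).const_mul (-b)
    have hfs_split : ∫ q, fs q ∂μ2
        = (ms : ℝ) * (∫ q, -Real.log (1 - c * p q) ∂μ2)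
          + ∑ i, (-b) * ∫ q, g q (s i) ∂μ2 := by
      rw [hfs_def]
      rw [integral_add (hInt1.const_mul _) hsum_int, integral_const_mul,
        integral_finset_sum _ fun i _ => (hInti i).const_mul (-b)]
      simp_rw [integral_const_mul]
    -- the empirical error
    set Ehat : ℝ := ∫ q, (1 / (ms : ℝ)) * ∑ i, g q (s i) ∂μ2 with hEhat_def
    have hms0 : ((ms : ℝ)) ≠ 0 := Nat.cast_ne_zero.2 hms.ne'
    have hmspos : (0 : ℝ) < ms := Nat.cast_pos.2 hms
    have hEhat_eq : ∑ i, ∫ q, g q (s i) ∂μ2 = (ms : ℝ) * Ehat := by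
      rw [hEhat_def, integral_const_mul,
        ← integral_finset_sum _ fun i _ => hInti i]
      field_simp
    -- lower bound on the log term integral
    have hJ_def : jointErr F S ρ = ∫ q, p q ∂μ2 := rfl
    have hpint : Integrable p μ2 :=
      my_bdd_integrable _ hpm (fun q => abs_le.2 ⟨by linarith [hp0 q], hp1 q⟩)
    have hlog_ge : c * (∫ q, p q ∂μ2) ≤ ∫ q, -Real.log (1 - c * p q) ∂μ2 := by
      rw [← integral_const_mul]
      refine integral_mono (hpint.const_mul c) hInt1 fun q => ?_
      have := Real.log_le_sub_one_of_pos (h1cp q)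
      simp only
      linarith
    -- final algebra
    set J : ℝ := ∫ q, p q ∂μ2 with hJ2
    set R : ℝ := 2 * klReal ρ π + Real.log (1 / δ) with hR_def
    have hmain : (ms : ℝ) * (c * J) ≤ (ms : ℝ) * b * Ehat + R := by
      have h1 : (ms : ℝ) * (c * J) ≤ (ms : ℝ) * ∫ q, -Real.log (1 - c * p q) ∂μ2 :=
        mul_le_mul_of_nonneg_left hlog_ge (Nat.cast_nonneg _)
      have hsum_eq : ∑ i, (-b) * ∫ q, g q (s i) ∂μ2 = -b * ((ms : ℝ) * Ehat) := by
        rw [← Finset.mul_sum, hEhat_eq]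
      have h2 : (ms : ℝ) * ∫ q, -Real.log (1 - c * p q) ∂μ2
          = (∫ q, fs q ∂μ2) + b * ((ms : ℝ) * Ehat) := by
        rw [hfs_split, hsum_eq]
        ring
      nlinarith [hfs_le]
    show J ≤ b / c * (Ehat + R / ((ms : ℝ) * b))
    have hrhs : b / c * (Ehat + R / ((ms : ℝ) * b)) = ((ms : ℝ) * b * Ehat + R) / ((ms : ℝ) * c) := by
      field_simp
    rw [hrhs, le_div_iff₀ (by positivity)]
    nlinarith [hmain]
  -- conclude with the measure computation
  have hbadm : MeasurableSet {s : Fin ms → X × Bool | 1 / δ ≤ A s} :=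
    measurableSet_le measurable_const hAmeas
  have hgood_eq : {s : Fin ms → X × Bool | A s < 1 / δ}
      = {s : Fin ms → X × Bool | 1 / δ ≤ A s}ᶜ := by
    ext s; simp [not_le]
  have hgood_meas : ENNReal.ofReal (1 - δ) ≤ μpi {s : Fin ms → X × Bool | A s < 1 / δ} := by
    rw [hgood_eq, prob_compl_eq_one_sub hbadm]
    have h1 : ENNReal.ofReal (1 - δ) = 1 - ENNReal.ofReal δ := by
      rw [ENNReal.ofReal_sub _ hδ0.le, ENNReal.ofReal_one]
    rw [h1]
    exact tsub_le_tsub_left hMarkov 1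
  exact hgood_meas.trans (measure_mono hsub)

end
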